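/- The number of right identities of the triangle Δ^{(n)}{a,b,c} equals (b−a)(c−b): the right identities are exactly the maps a_k b_{n−k−j} c_j with a+1 ≤ k ≤ b and n−c ≤ j ≤ n−b−1. -/
import Mathlib


/-- The element `a_k b_ℓ c_{n-k-ℓ}` of the triangle `Δ^{(n)}{a,b,c}`. -/
def triMap (n : ℕ) (a b c : Fin n) (k ℓ : ℕ) : Fin n → Fin n :=
  fun i => if (i : ℕ) < k then a else if (i : ℕ) < k + ℓ then b else c

/-- A downward-closed finset of `Fin n` is an initial segment determined by its card. -/
lemma lower_mem_iff {n : ℕ} (F : Finset (Fin n))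
    (h : ∀ i j : Fin n, i ≤ j → j ∈ F → i ∈ F) (i : Fin n) :
    i ∈ F ↔ (i : ℕ) < F.card := by
  constructor
  · intro hi
    have hsub : Finset.Iic i ⊆ F := fun x hx => h x i (Finset.mem_Iic.mp hx) hi
    have := Finset.card_le_card hsub
    rw [Fin.card_Iic] at this
    omega
  · intro hi
    by_contra hmem
    have hsub : F ⊆ Finset.Iio i := by
      intro x hx
      rw [Finset.mem_Iio]
      by_contra hle
      exact hmem (h i x (le_of_not_gt hle) hx)
    have := Finset.card_le_card hsub
    rw [Fin.card_Iio] at this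
    omega

theorem stmt18 (n : ℕ) (hn : 3 ≤ n) (a b c : Fin n) (hab : a < b) (hbc : b < c) :
    ({ε : Fin n → Fin n | Monotone ε ∧ Set.range ε ⊆ {a, b, c} ∧
        ∀ β : Fin n → Fin n, Monotone β → Set.range β ⊆ {a, b, c} → ε ∘ β = β}
      = {ε : Fin n → Fin n | ∃ k j : ℕ, (a : ℕ) + 1 ≤ k ∧ k ≤ (b : ℕ) ∧
          n - (c : ℕ) ≤ j ∧ j ≤ n - (b : ℕ) - 1 ∧ ε = triMap n a b c k (n - k - j)}) ∧
    Nat.card {ε : Fin n → Fin n // Monotone ε ∧ Set.range ε ⊆ {a, b, c} ∧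
        ∀ β : Fin n → Fin n, Monotone β → Set.range β ⊆ {a, b, c} → ε ∘ β = β}
      = ((b : ℕ) - (a : ℕ)) * ((c : ℕ) - (b : ℕ)) := by
  have hab' : (a : ℕ) < b := hab
  have hbc' : (b : ℕ) < c := hbc
  have hcn : (c : ℕ) < n := c.isLt
  have hane : a ≠ b := ne_of_lt hab
  have hbne : b ≠ c := ne_of_lt hbc
  have hace : a ≠ c := ne_of_lt (lt_trans hab hbc)
  -- the backward direction helper: triMap with good parameters is a right identity
  have backward : ∀ k j : ℕ, (a : ℕ) + 1 ≤ k → k ≤ (b : ℕ) →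
      n - (c : ℕ) ≤ j → j ≤ n - (b : ℕ) - 1 →
      Monotone (triMap n a b c k (n - k - j)) ∧
      Set.range (triMap n a b c k (n - k - j)) ⊆ {a, b, c} ∧
      ∀ β : Fin n → Fin n, Monotone β → Set.range β ⊆ {a, b, c} →
        (triMap n a b c k (n - k - j)) ∘ β = β := by
    intro k j hk1 hk2 hj1 hj2
    have hkj : k + (n - k - j) = n - j := by omega
    have hfixa : triMap n a b c k (n - k - j) a = a := by
      simp only [triMap]
      rw [if_pos (by omega)]
    have hfixb : triMap n a b c k (n - k - j) b = b := by
      simp only [triMap]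
      rw [if_neg (by omega), if_pos (by omega)]
    have hfixc : triMap n a b c k (n - k - j) c = c := by
      simp only [triMap]
      rw [if_neg (by omega), if_neg (by omega)]
    refine ⟨?_, ?_, ?_⟩
    · intro x y hxy
      have hxy' : (x : ℕ) ≤ y := hxy
      simp only [triMap]
      split_ifs with h1 h2 h3 h4 h5
      all_goals first
        | rfl
        | exact le_of_lt hab
        | exact le_of_lt hbc
        | exact le_of_lt (lt_trans hab hbc)
        | omega
    · rintro x ⟨i, rfl⟩
      simp only [triMap]
      split_ifs
      · exact Set.mem_insert _ _
      · exact Set.mem_insert_of_mem _ (Set.mem_insert _ _)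
      · exact Set.mem_insert_of_mem _ (Set.mem_insert_of_mem _ rfl)
    · intro β hβm hβr
      funext i
      have hi : β i ∈ ({a, b, c} : Set (Fin n)) := hβr ⟨i, rfl⟩
      simp only [Set.mem_insert_iff, Set.mem_singleton_iff] at hi
      rcases hi with h | h | h <;> simp [Function.comp, h, hfixa, hfixb, hfixc]
  -- the forward direction
  have forward : ∀ ε : Fin n → Fin n, Monotone ε → Set.range ε ⊆ {a, b, c} →
      (∀ β : Fin n → Fin n, Monotone β → Set.range β ⊆ {a, b, c} → ε ∘ β = β) →
      ∃ k j : ℕ, (a : ℕ) + 1 ≤ k ∧ k ≤ (b : ℕ) ∧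
          n - (c : ℕ) ≤ j ∧ j ≤ n - (b : ℕ) - 1 ∧ ε = triMap n a b c k (n - k - j) := by
    intro ε hmono hr hid
    have hz : (0 : ℕ) < n := by omega
    -- ε fixes a, b, c (using constant β's)
    have hfix : ∀ x : Fin n, x ∈ ({a, b, c} : Set (Fin n)) → ε x = x := by
      intro x hx
      have hcm : Monotone (fun _ : Fin n => x) := monotone_const
      have hcr : Set.range (fun _ : Fin n => x) ⊆ {a, b, c} := by
        rintro y ⟨i, rfl⟩; exact hx
      have := congrFun (hid _ hcm hcr) ⟨0, hz⟩
      exact this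
    have hfa : ε a = a := hfix a (Set.mem_insert _ _)
    have hfb : ε b = b := hfix b (Set.mem_insert_of_mem _ (Set.mem_insert _ _))
    have hfc : ε c = c := hfix c (Set.mem_insert_of_mem _ (Set.mem_insert_of_mem _ rfl))
    have hrε : ∀ i, ε i = a ∨ ε i = b ∨ ε i = c := by
      intro i
      have := hr ⟨i, rfl⟩
      simpa [Set.mem_insert_iff] using this
    set F : Finset (Fin n) := Finset.univ.filter (fun i => ε i = a) with hF
    set G : Finset (Fin n) := Finset.univ.filter (fun i => ε i ≠ c) with hG
    have hFlow : ∀ i j : Fin n, i ≤ j → j ∈ F → i ∈ F := by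
      intro i j hij hj
      rw [hF, Finset.mem_filter] at hj ⊢
      refine ⟨Finset.mem_univ _, ?_⟩
      have h1 : ε i ≤ ε j := hmono hij
      rw [hj.2] at h1
      rcases hrε i with h | h | h
      · exact h
      · rw [h] at h1; exact absurd (lt_of_lt_of_le hab h1) (lt_irrefl _)
      · rw [h] at h1; exact absurd (lt_of_lt_of_le (lt_trans hab hbc) h1) (lt_irrefl _)
    have hGlow : ∀ i j : Fin n, i ≤ j → j ∈ G → i ∈ G := by
      intro i j hij hj
      rw [hG, Finset.mem_filter] at hj ⊢
      refine ⟨Finset.mem_univ _, ?_⟩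
      have h1 : ε i ≤ ε j := hmono hij
      intro hc2
      rw [hc2] at h1
      rcases hrε j with h | h | h
      · rw [h] at h1; exact absurd (lt_of_le_of_lt h1 (lt_trans hab hbc)) (lt_irrefl _)
      · rw [h] at h1; exact absurd (lt_of_le_of_lt h1 hbc) (lt_irrefl _)
      · exact hj.2 h
    set k := F.card with hk
    set m := G.card with hm
    have hFmem : ∀ i : Fin n, ε i = a ↔ (i : ℕ) < k := by
      intro i
      rw [hk, ← lower_mem_iff F hFlow i, hF, Finset.mem_filter]
      simp
    have hGmem : ∀ i : Fin n, ε i ≠ c ↔ (i : ℕ) < m := by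
      intro i
      rw [hm, ← lower_mem_iff G hGlow i, hG, Finset.mem_filter]
      simp
    have hkm : k ≤ m := by
      refine Finset.card_le_card ?_
      intro i hi
      rw [hF, Finset.mem_filter] at hi
      rw [hG, Finset.mem_filter]
      exact ⟨Finset.mem_univ _, by rw [hi.2]; exact hace⟩
    have hmn : m ≤ n := by
      have := Finset.card_le_univ G
      simpa using this
    have hak : (a : ℕ) < k := (hFmem a).mp hfa
    have hkb : k ≤ (b : ℕ) := by
      by_contra h
      have := (hFmem b).mpr (by omega)
      exact hane (this.symm.trans hfb)
    have hbm : (b : ℕ) < m := (hGmem b).mp (by rw [hfb]; exact hbne)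
    have hmc : m ≤ (c : ℕ) := by
      by_contra h
      have := (hGmem c).mpr (by omega)
      exact this hfc
    refine ⟨k, n - m, by omega, hkb, by omega, by omega, ?_⟩
    have hrw : n - k - (n - m) = m - k := by omega
    rw [hrw]
    funext i
    simp only [triMap]
    have hkm' : k + (m - k) = m := by omega
    rw [hkm']
    split_ifs with h1 h2
    · exact (hFmem i).mpr h1
    · rcases hrε i with h | h | h
      · rw [hFmem i] at h; omega
      · exact h
      · rw [← hGmem i] at h2; exact absurd h h2
    · rcases hrε i with h | h | h
      · rw [hFmem i] at h; omega
      · have : ε i ≠ c := by rw [h]; exact hbne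
        rw [hGmem i] at this; omega
      · exact h
  -- the set equality
  have hset : ({ε : Fin n → Fin n | Monotone ε ∧ Set.range ε ⊆ {a, b, c} ∧
        ∀ β : Fin n → Fin n, Monotone β → Set.range β ⊆ {a, b, c} → ε ∘ β = β}
      = {ε : Fin n → Fin n | ∃ k j : ℕ, (a : ℕ) + 1 ≤ k ∧ k ≤ (b : ℕ) ∧
          n - (c : ℕ) ≤ j ∧ j ≤ n - (b : ℕ) - 1 ∧ ε = triMap n a b c k (n - k - j)}) := by
    ext ε
    simp only [Set.mem_setOf_eq]
    constructor
    · rintro ⟨h1, h2, h3⟩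
      exact forward ε h1 h2 h3
    · rintro ⟨k, j, hk1, hk2, hj1, hj2, rfl⟩
      exact backward k j hk1 hk2 hj1 hj2
  refine ⟨hset, ?_⟩
  -- cardinality
  have hcard1 : Nat.card {ε : Fin n → Fin n // Monotone ε ∧ Set.range ε ⊆ {a, b, c} ∧
        ∀ β : Fin n → Fin n, Monotone β → Set.range β ⊆ {a, b, c} → ε ∘ β = β}
      = Nat.card {ε : Fin n → Fin n // ∃ k j : ℕ, (a : ℕ) + 1 ≤ k ∧ k ≤ (b : ℕ) ∧
          n - (c : ℕ) ≤ j ∧ j ≤ n - (b : ℕ) - 1 ∧ ε = triMap n a b c k (n - k - j)} :=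
    Nat.card_congr (Equiv.setCongr hset)
  rw [hcard1]
  set t : Finset (ℕ × ℕ) :=
    (Finset.Icc ((a : ℕ) + 1) (b : ℕ)) ×ˢ (Finset.Icc (n - (c : ℕ)) (n - (b : ℕ) - 1)) with ht
  set f : ℕ × ℕ → (Fin n → Fin n) := fun p => triMap n a b c p.1 (n - p.1 - p.2) with hf
  have himg : {ε : Fin n → Fin n | ∃ k j : ℕ, (a : ℕ) + 1 ≤ k ∧ k ≤ (b : ℕ) ∧
          n - (c : ℕ) ≤ j ∧ j ≤ n - (b : ℕ) - 1 ∧ ε = triMap n a b c k (n - k - j)}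
      = ↑(t.image f) := by
    ext ε
    simp only [Set.mem_setOf_eq, Finset.coe_image, Set.mem_image, Finset.mem_coe, ht,
      Finset.mem_product, Finset.mem_Icc, hf]
    constructor
    · rintro ⟨k, j, h1, h2, h3, h4, rfl⟩
      exact ⟨(k, j), ⟨⟨h1, h2⟩, ⟨h3, h4⟩⟩, rfl⟩
    · rintro ⟨⟨k, j⟩, ⟨⟨h1, h2⟩, ⟨h3, h4⟩⟩, rfl⟩
      exact ⟨k, j, h1, h2, h3, h4, rfl⟩
  have hinj : Set.InjOn f ↑t := by
    rintro ⟨k, j⟩ hp ⟨k', j'⟩ hq heq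
    simp only [ht, Finset.coe_product, Set.mem_prod, Finset.mem_coe, Finset.mem_Icc] at hp hq
    obtain ⟨⟨hk1, hk2⟩, hj1, hj2⟩ := hp
    obtain ⟨⟨hk1', hk2'⟩, hj1', hj2'⟩ := hq
    simp only [hf] at heq
    -- first: k = k'
    have hkk : k = k' := by
      by_contra hne
      rcases Nat.lt_or_ge k k' with h | h
      · have hlt : k < n := by omega
        have := congrFun heq ⟨k, hlt⟩
        simp only [triMap] at this
        rw [if_neg (by omega), if_pos (by omega), if_pos (by omega)] at this
        exact hane this.symm
      · have h' : k' < k := by omega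
        have hlt : k' < n := by omega
        have := congrFun heq ⟨k', hlt⟩
        simp only [triMap] at this
        rw [if_pos (by omega), if_neg (by omega), if_pos (by omega)] at this
        exact hane this
    subst hkk
    have hjj : j = j' := by
      by_contra hne
      rcases Nat.lt_or_ge j j' with h | h
      · have hlt : n - j' < n := by omega
        have := congrFun heq ⟨n - j', hlt⟩
        simp only [triMap] at this
        rw [if_neg (by omega), if_pos (by omega), if_neg (by omega), if_neg (by omega)] at this
        exact hbne this
      · have h' : j' < j := by omega
        have hlt : n - j < n := by omega
        have := congrFun heq ⟨n - j, hlt⟩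
        simp only [triMap] at this
        rw [if_neg (by omega), if_neg (by omega), if_neg (by omega), if_pos (by omega)] at this
        exact hbne this.symm
    rw [hjj]
  calc Nat.card {ε : Fin n → Fin n // ∃ k j : ℕ, (a : ℕ) + 1 ≤ k ∧ k ≤ (b : ℕ) ∧
          n - (c : ℕ) ≤ j ∧ j ≤ n - (b : ℕ) - 1 ∧ ε = triMap n a b c k (n - k - j)}
      = Nat.card ↑(↑(t.image f) : Set (Fin n → Fin n)) := Nat.card_congr (Equiv.setCongr himg)
    _ = (t.image f).card := by rw [Nat.card_eq_fintype_card]; simp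
    _ = t.card := Finset.card_image_of_injOn hinj
    _ = ((b : ℕ) - (a : ℕ)) * ((c : ℕ) - (b : ℕ)) := by
        rw [ht, Finset.card_product, Nat.card_Icc, Nat.card_Icc]
        have : (b : ℕ) + 1 - ((a : ℕ) + 1) = (b : ℕ) - (a : ℕ) := by omega
        rw [this]
        congr 1
        omega
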